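/- Given an α-Hölder path X : [0,T] → ℝ^d and a twice continuously differentiable function F : ℝ^d → L(ℝ^d, ℝ^m), the pair (Y, Y') with Y = F∘X and Y' = DF∘X is a controlled path with respect to X; that is, the remainder R^Y_{st} := Y_{st} − Y'_s X_{st} is 2α-Hölder continuous. -/

import Mathlib

/-- If `X : [0,T] → ℝ^d` is `α`-Hölder with `α ∈ (1/3, 1/2]` and
`F : ℝ^d → L(ℝ^d, ℝ^m)` is twice continuously differentiable, then the pair
`(Y, Y') = (F ∘ X, DF ∘ X)` is a controlled path with respect to `X`:
both `Y` and `Y'` are `α`-Hölder on `[0,T]` and the remainder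
`R^Y_{st} = Y_t - Y_s - Y'_s (X_t - X_s)` is `2α`-Hölder on the simplex. -/
theorem smooth_function_of_path_is_controlled
    {d m : ℕ} (T α : ℝ) (hT : 0 < T) (hα : 1/3 < α) (hα' : α ≤ 1/2)
    (X : ℝ → (Fin d → ℝ))
    (CX : ℝ)
    (hX : ∀ s t : ℝ, s ∈ Set.Icc 0 T → t ∈ Set.Icc 0 T →
      ‖X t - X s‖ ≤ CX * |t - s| ^ α)
    (F : (Fin d → ℝ) → ((Fin d → ℝ) →L[ℝ] (Fin m → ℝ)))
    (hF : ContDiff ℝ 2 F) :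
    (∃ C : ℝ, ∀ s t : ℝ, s ∈ Set.Icc 0 T → t ∈ Set.Icc 0 T →
        ‖F (X t) - F (X s)‖ ≤ C * |t - s| ^ α) ∧
    (∃ C : ℝ, ∀ s t : ℝ, s ∈ Set.Icc 0 T → t ∈ Set.Icc 0 T →
        ‖fderiv ℝ F (X t) - fderiv ℝ F (X s)‖ ≤ C * |t - s| ^ α) ∧
    (∃ C : ℝ, ∀ s t : ℝ, s ∈ Set.Icc 0 T → t ∈ Set.Icc 0 T → s ≤ t →
        ‖F (X t) - F (X s) - fderiv ℝ F (X s) (X t - X s)‖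
          ≤ C * |t - s| ^ (2 * α)) := by
  have hα0 : (0:ℝ) ≤ α := le_of_lt (lt_trans (by norm_num) hα)
  have h0T : (0:ℝ) ∈ Set.Icc 0 T := ⟨le_refl 0, hT.le⟩
  have hTT : T ∈ Set.Icc (0:ℝ) T := ⟨hT.le, le_refl T⟩
  have hTpow : 0 < T ^ α := Real.rpow_pos_of_pos hT α
  have hCX : 0 ≤ CX := by
    have h := (norm_nonneg _).trans (hX 0 T h0T hTT)
    rw [sub_zero, abs_of_pos hT] at h
    exact nonneg_of_mul_nonneg_right (by linarith [h] : 0 ≤ T ^ α * CX) hTpow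
  set R : ℝ := CX * T ^ α with hRdef
  set K := Metric.closedBall (X 0) R with hKdef
  have hXK : ∀ t ∈ Set.Icc (0:ℝ) T, X t ∈ K := by
    intro t ht
    rw [hKdef, Metric.mem_closedBall, dist_eq_norm]
    calc ‖X t - X 0‖ ≤ CX * |t - 0| ^ α := hX 0 t h0T ht
      _ ≤ CX * T ^ α := by
          apply mul_le_mul_of_nonneg_left _ hCX
          rw [sub_zero, abs_of_nonneg ht.1]
          exact Real.rpow_le_rpow ht.1 ht.2 hα0
  have hKconv : Convex ℝ K := convex_closedBall _ _
  have hKcomp : IsCompact K := isCompact_closedBall _ _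
  have hXbound : ∀ s t : ℝ, s ∈ Set.Icc 0 T → t ∈ Set.Icc 0 T →
      ‖X t - X s‖ ≤ CX * |t - s| ^ α := hX
  -- bound on fderiv F over K
  have hFd : Differentiable ℝ F := hF.differentiable two_ne_zero
  have hDFc : Continuous (fderiv ℝ F) := hF.continuous_fderiv two_ne_zero
  obtain ⟨L1, hL1⟩ := hKcomp.exists_bound_of_continuousOn (f := fderiv ℝ F) (hDFc.continuousOn (s := K))
  have hL1' : ∀ x ∈ K, ‖fderiv ℝ F x‖ ≤ max L1 0 := fun x hx => (hL1 x hx).trans (le_max_left _ _)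
  have hL1nn : 0 ≤ max L1 0 := le_max_right _ _
  -- fderiv F is ContDiff 1
  have hG : ContDiff ℝ 1 (fderiv ℝ F) := hF.fderiv_right (by norm_num)
  obtain ⟨K2, hK2⟩ := (hG.contDiffOn (s := K)).exists_lipschitzOnWith one_ne_zero hKconv hKcomp
  set L2 : ℝ := (K2 : ℝ) with hL2
  have hL2nn : 0 ≤ max L2 0 := le_max_right _ _
  -- F Lipschitz on K
  have hFLip : ∀ x ∈ K, ∀ y ∈ K, ‖F y - F x‖ ≤ max L1 0 * ‖y - x‖ := fun x hx y hy =>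
    hKconv.norm_image_sub_le_of_norm_fderiv_le (fun z _ => hFd z) hL1' hx hy
  have hGLip : ∀ x ∈ K, ∀ y ∈ K, ‖fderiv ℝ F y - fderiv ℝ F x‖ ≤ max L2 0 * ‖y - x‖ := fun x hx y hy =>
    (hK2.norm_sub_le hy hx).trans (mul_le_mul_of_nonneg_right (le_max_left _ _) (norm_nonneg _))
  refine ⟨⟨max L1 0 * CX, ?_⟩, ⟨max L2 0 * CX, ?_⟩, ⟨max L2 0 * (CX * CX), ?_⟩⟩
  · intro s t hs ht
    calc ‖F (X t) - F (X s)‖ ≤ max L1 0 * ‖X t - X s‖ := hFLip _ (hXK s hs) _ (hXK t ht)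
      _ ≤ max L1 0 * (CX * |t - s| ^ α) := mul_le_mul_of_nonneg_left (hX s t hs ht) hL1nn
      _ = max L1 0 * CX * |t - s| ^ α := by ring
  · intro s t hs ht
    calc ‖fderiv ℝ F (X t) - fderiv ℝ F (X s)‖ ≤ max L2 0 * ‖X t - X s‖ := hGLip _ (hXK s hs) _ (hXK t ht)
      _ ≤ max L2 0 * (CX * |t - s| ^ α) := mul_le_mul_of_nonneg_left (hX s t hs ht) hL2nn
      _ = max L2 0 * CX * |t - s| ^ α := by ring
  · intro s t hs ht _
    have hseg : segment ℝ (X s) (X t) ⊆ K := hKconv.segment_subset (hXK s hs) (hXK t ht)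
    have hsegconv : Convex ℝ (segment ℝ (X s) (X t)) := convex_segment _ _
    have hbd : ∀ z ∈ segment ℝ (X s) (X t),
        ‖fderiv ℝ F z - fderiv ℝ F (X s)‖ ≤ max L2 0 * ‖X t - X s‖ := by
      intro z hz
      have hzK := hseg hz
      obtain ⟨a, b, ha, hb, hab, hz'⟩ := hz
      have hzXs : z - X s = b • (X t - X s) := by
        rw [← hz']; rw [show a = 1 - b by linarith]
        module
      calc ‖fderiv ℝ F z - fderiv ℝ F (X s)‖ ≤ max L2 0 * ‖z - X s‖ :=
            hGLip _ (hXK s hs) _ hzK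
        _ ≤ max L2 0 * ‖X t - X s‖ := by
            apply mul_le_mul_of_nonneg_left _ hL2nn
            rw [hzXs, norm_smul, Real.norm_eq_abs, abs_of_nonneg hb]
            exact mul_le_of_le_one_left (norm_nonneg _) (by linarith)
    have key := hsegconv.norm_image_sub_le_of_norm_fderiv_le'
      (f := F) (φ := fderiv ℝ F (X s))
      (fun z _ => hFd z) hbd (left_mem_segment ℝ (X s) (X t)) (right_mem_segment ℝ (X s) (X t))
    have hXb := hX s t hs ht
    have h2 : |t - s| ^ (2 * α) = (|t - s| ^ α) * (|t - s| ^ α) := by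
      rw [← Real.rpow_add' (abs_nonneg _) (by positivity)]
      ring_nf
    calc ‖F (X t) - F (X s) - fderiv ℝ F (X s) (X t - X s)‖
        ≤ max L2 0 * ‖X t - X s‖ * ‖X t - X s‖ := key
      _ ≤ max L2 0 * (CX * |t - s| ^ α) * (CX * |t - s| ^ α) := by
          apply mul_le_mul
          · exact mul_le_mul_of_nonneg_left hXb hL2nn
          · exact hXb
          · exact norm_nonneg _
          · positivity
      _ = max L2 0 * (CX * CX) * |t - s| ^ (2 * α) := by rw [h2]; ring
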